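/- Let g:[a,b]→ℝ be left-continuous on (a,b) and increasing, and let f:[a,b]→ℝ be g-Lipschitz continuous with constant H (not necessarily monotone). Then f^C is g^C-Lipschitz continuous with constant H. -/

import Mathlib

open Set

/-- Right jump of a function: `u(t⁺) - u(t)`. -/
noncomputable def rjump (u : ℝ → ℝ) (t : ℝ) : ℝ := Function.rightLim u t - u t

/-- Cumulative jump part of `u` on `[a, t)`: `u^B(t) = Σ_{s ∈ [a,t)} Δ⁺u(s)`. -/
noncomputable def jumpPart (u : ℝ → ℝ) (a t : ℝ) : ℝ :=
  ∑' s : ℝ, Set.indicator (Set.Ico a t) (fun v => rjump u v) s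

/-- Continuous part of `u` (relative to the base point `a`): `u^C = u - u^B`. -/
noncomputable def contPart (u : ℝ → ℝ) (a t : ℝ) : ℝ := u t - jumpPart u a t

/-- `I` is the Kurzweil–Stieltjes integral `∫_a^b f dg`: for every `ε > 0` there is a
gauge `δ` such that every `δ`-fine tagged partition of `[a,b]` has Riemann–Stieltjes
sum within `ε` of `I`. -/
def IsKSIntegral (f g : ℝ → ℝ) (a b I : ℝ) : Prop :=
  ∀ ε > (0:ℝ), ∃ δ : ℝ → ℝ, (∀ x, 0 < δ x) ∧
    ∀ (n : ℕ) (t ξ : ℕ → ℝ),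
      t 0 = a → t n = b →
      (∀ i < n, t i < t (i + 1)) →
      (∀ i < n, t i ≤ ξ i ∧ ξ i ≤ t (i + 1)) →
      (∀ i < n, ξ i - δ (ξ i) < t i ∧ t (i + 1) < ξ i + δ (ξ i)) →
      |(∑ i ∈ Finset.range n, f (ξ i) * (g (t (i + 1)) - g (t i))) - I| < ε

/-- `f` is `g`-Lipschitz continuous on `[a,b]` with constant `H`. -/
def GLipschitzOn (f g : ℝ → ℝ) (H a b : ℝ) : Prop :=
  ∀ t ∈ Set.Icc a b, ∀ s ∈ Set.Icc a b, |f t - f s| ≤ H * |g t - g s|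

/-- `g` is left-continuous at every point of `s`. -/
def LeftContOn (g : ℝ → ℝ) (s : Set ℝ) : Prop :=
  ∀ t ∈ s, Filter.Tendsto g (nhdsWithin t (Set.Iio t)) (nhds (g t))

open Filter Topology in
private lemma rl_spec {a b : ℝ} {m : ℝ → ℝ} (hm : MonotoneOn m (Set.Icc a b))
    {c : ℝ} (hc : c ∈ Set.Ico a b) :
    Tendsto m (𝓝[>] c) (𝓝 (Function.rightLim m c)) ∧
      m c ≤ Function.rightLim m c ∧
      ∀ x ∈ Set.Ioc c b, Function.rightLim m c ≤ m x := by
  obtain ⟨hac, hcb⟩ := hc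
  have hsub : Set.Ioo c b ⊆ Set.Icc a b := fun x hx => ⟨hac.trans hx.1.le, hx.2.le⟩
  have hne : (Set.Ioo c b).Nonempty := Set.nonempty_Ioo.2 hcb
  have hlb : ∀ x ∈ Set.Ioo c b, m c ≤ m x := fun x hx =>
    hm ⟨hac, hcb.le⟩ (hsub hx) hx.1.le
  have hbdd : BddBelow (m '' Set.Ioo c b) := by
    refine ⟨m c, ?_⟩
    rintro _ ⟨x, hx, rfl⟩
    exact hlb x hx
  have htend : Tendsto m (𝓝[>] c) (𝓝 (sInf (m '' Set.Ioo c b))) :=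
    MonotoneOn.tendsto_nhdsWithin_Ioo_right hne (hm.mono hsub) hbdd
  have hrl : Function.rightLim m c = sInf (m '' Set.Ioo c b) :=
    rightLim_eq_of_tendsto htend
  rw [hrl]
  refine ⟨htend, ?_, ?_⟩
  · exact le_csInf (hne.image m) (by rintro _ ⟨x, hx, rfl⟩; exact hlb x hx)
  · intro x hx
    obtain ⟨y, hy⟩ : (Set.Ioo c x).Nonempty := Set.nonempty_Ioo.2 hx.1
    have hyIoo : y ∈ Set.Ioo c b := ⟨hy.1, lt_of_lt_of_le hy.2 hx.2⟩
    calc sInf (m '' Set.Ioo c b) ≤ m y := csInf_le hbdd ⟨y, hyIoo, rfl⟩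
      _ ≤ m x := hm (hsub hyIoo) ⟨hac.trans (hy.1.le.trans hy.2.le), hx.2⟩ hy.2.le

lemma rjump_nonneg {a b : ℝ} {m : ℝ → ℝ} (hm : MonotoneOn m (Set.Icc a b))
    {c : ℝ} (hc : c ∈ Set.Ico a b) : 0 ≤ rjump m c :=
  sub_nonneg.2 (rl_spec hm hc).2.1

lemma jumpSum_le {a b : ℝ} {m : ℝ → ℝ} (hm : MonotoneOn m (Set.Icc a b))
    {c : ℝ} (hc : c ∈ Set.Icc a b) :
    ∀ F : Finset ℝ, ∀ t ∈ Set.Icc a b, c ≤ t → ↑F ⊆ Set.Ico c t →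
      ∑ s ∈ F, rjump m s ≤ m t - m c := by
  intro F
  induction F using Finset.strongInduction with
  | _ F ih =>
    intro t ht hct hF
    rcases F.eq_empty_or_nonempty with rfl | hne
    · simpa using hm hc ht hct
    · set M := F.max' hne with hM
      have hMF : M ∈ F := F.max'_mem hne
      have hMIco : M ∈ Set.Ico c t := hF hMF
      have hMmem : M ∈ Set.Icc a b := ⟨hc.1.trans hMIco.1, hMIco.2.le.trans ht.2⟩
      have herase : ↑(F.erase M) ⊆ Set.Ico c M := by
        intro x hx
        simp only [Finset.coe_erase, Set.mem_diff, Set.mem_singleton_iff,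
          Finset.mem_coe] at hx
        exact ⟨(hF hx.1).1, lt_of_le_of_ne (F.le_max' x hx.1) hx.2⟩
      have hIH := ih (F.erase M) (Finset.erase_ssubset hMF) M hMmem hMIco.1 herase
      have hjump : rjump m M ≤ m t - m M := by
        have := (rl_spec hm ⟨hMmem.1, lt_of_lt_of_le hMIco.2 ht.2⟩).2.2 t
          ⟨hMIco.2, ht.2⟩
        simp only [rjump]; linarith
      have hsplit : ∑ s ∈ F.erase M, rjump m s + rjump m M = ∑ s ∈ F, rjump m s :=
        Finset.sum_erase_add F _ hMF
      linarith

lemma ind_summable {a b c t : ℝ} {m : ℝ → ℝ} (hm : MonotoneOn m (Set.Icc a b))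
    (hc : c ∈ Set.Icc a b) (ht : t ∈ Set.Icc a b) (hct : c ≤ t) :
    Summable (Set.indicator (Set.Ico c t) (rjump m)) ∧
      0 ≤ ∑' s, Set.indicator (Set.Ico c t) (rjump m) s ∧
      ∑' s, Set.indicator (Set.Ico c t) (rjump m) s ≤ m t - m c := by
  classical
  have hnn : ∀ x, 0 ≤ Set.indicator (Set.Ico c t) (rjump m) x := by
    intro x
    by_cases hx : x ∈ Set.Ico c t
    · rw [Set.indicator_of_mem hx]
      exact rjump_nonneg hm ⟨hc.1.trans hx.1, lt_of_lt_of_le hx.2 ht.2⟩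
    · rw [Set.indicator_of_notMem hx]
  have hbound : ∀ u : Finset ℝ, ∑ x ∈ u, Set.indicator (Set.Ico c t) (rjump m) x
      ≤ m t - m c := by
    intro u
    have : ∑ x ∈ u, Set.indicator (Set.Ico c t) (rjump m) x
        = ∑ x ∈ u.filter (· ∈ Set.Ico c t), rjump m x := by
      rw [Finset.sum_filter]
      exact Finset.sum_congr rfl fun x _ => by
        rw [Set.indicator_apply]
    rw [this]
    exact jumpSum_le hm hc _ t ht hct (by intro x hx; exact (Finset.mem_filter.1 hx).2)
  have hsum : Summable (Set.indicator (Set.Ico c t) (rjump m)) :=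
    summable_of_sum_le hnn hbound
  exact ⟨hsum, tsum_nonneg hnn, hsum.tsum_le_of_sum_le hbound⟩

open Filter Topology in
private lemma main_aux (a b H : ℝ) (g f : ℝ → ℝ)
    (hg : MonotoneOn g (Set.Icc a b))
    (hf : GLipschitzOn f g H a b) (hH : 0 < H)
    {s t : ℝ} (hs : s ∈ Set.Icc a b) (ht : t ∈ Set.Icc a b) (hst : s ≤ t) :
    |contPart f a t - contPart f a s| ≤ H * |contPart g a t - contPart g a s| := by
  classical
  set p : ℝ → ℝ := fun x => (H * g x + f x) / 2 with hp_def
  set q : ℝ → ℝ := fun x => (H * g x - f x) / 2 with hq_def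
  have hp : MonotoneOn p (Set.Icc a b) := by
    intro x hx y hy hxy
    have h1 := hf y hy x hx
    have h2 : |g y - g x| = g y - g x := abs_of_nonneg (sub_nonneg.2 (hg hx hy hxy))
    rw [h2] at h1
    have := neg_abs_le (f y - f x)
    simp only [hp_def]
    have h3 : - (H * (g y - g x)) ≤ f y - f x := by
      calc -(H * (g y - g x)) ≤ -|f y - f x| := by linarith
        _ ≤ f y - f x := neg_abs_le _
    linarith
  have hq : MonotoneOn q (Set.Icc a b) := by
    intro x hx y hy hxy
    have h1 := hf y hy x hx
    have h2 : |g y - g x| = g y - g x := abs_of_nonneg (sub_nonneg.2 (hg hx hy hxy))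
    rw [h2] at h1
    simp only [hq_def]
    have h3 : f y - f x ≤ H * (g y - g x) := (le_abs_self _).trans h1
    linarith
  have ha : a ∈ Set.Icc a b := ⟨le_refl a, hs.1.trans hs.2⟩
  have has : a ≤ s := hs.1
  -- pointwise jump identities
  have hjf : ∀ x ∈ Set.Ico a b, rjump f x = rjump p x - rjump q x := by
    intro x hx
    have hrp := (rl_spec hp hx).1
    have hrq := (rl_spec hq hx).1
    have hfeq : f = fun y => p y - q y := by
      funext y; simp only [hp_def, hq_def]; ring
    have htf : Tendsto f (𝓝[>] x) (𝓝 (Function.rightLim p x - Function.rightLim q x)) := by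
      rw [hfeq]; exact hrp.sub hrq
    have : Function.rightLim f x = Function.rightLim p x - Function.rightLim q x :=
      rightLim_eq_of_tendsto htf
    simp only [rjump, this, hp_def, hq_def]; ring
  have hjg : ∀ x ∈ Set.Ico a b, rjump g x = (rjump p x + rjump q x) / H := by
    intro x hx
    have hrp := (rl_spec hp hx).1
    have hrq := (rl_spec hq hx).1
    have hgeq : g = fun y => (p y + q y) / H := by
      funext y; simp only [hp_def, hq_def]; field_simp; ring
    have htg : Tendsto g (𝓝[>] x)
        (𝓝 ((Function.rightLim p x + Function.rightLim q x) / H)) := by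
      rw [hgeq]; exact (hrp.add hrq).div_const H
    have : Function.rightLim g x = (Function.rightLim p x + Function.rightLim q x) / H :=
      rightLim_eq_of_tendsto htg
    simp only [rjump, this, hp_def, hq_def]; field_simp; ring
  -- pointwise indicator identities
  have hindf : ∀ t' ∈ Set.Icc a b,
      Set.indicator (Set.Ico a t') (rjump f) = fun x =>
        Set.indicator (Set.Ico a t') (rjump p) x - Set.indicator (Set.Ico a t') (rjump q) x := by
    intro t' ht'
    funext x
    by_cases hx : x ∈ Set.Ico a t'
    · have hxab : x ∈ Set.Ico a b := ⟨hx.1, lt_of_lt_of_le hx.2 ht'.2⟩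
      simp only [Set.indicator_of_mem hx]
      exact hjf x hxab
    · simp [Set.indicator_of_notMem hx]
  have hindg : ∀ t' ∈ Set.Icc a b,
      Set.indicator (Set.Ico a t') (rjump g) = fun x =>
        (Set.indicator (Set.Ico a t') (rjump p) x + Set.indicator (Set.Ico a t') (rjump q) x) / H := by
    intro t' ht'
    funext x
    by_cases hx : x ∈ Set.Ico a t'
    · have hxab : x ∈ Set.Ico a b := ⟨hx.1, lt_of_lt_of_le hx.2 ht'.2⟩
      simp only [Set.indicator_of_mem hx]
      exact hjg x hxab
    · simp [Set.indicator_of_notMem hx]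
  -- summability and bounds
  obtain ⟨sPt, _, _⟩ := ind_summable hp ha ht (hs.1.trans hst)
  obtain ⟨sQt, _, _⟩ := ind_summable hq ha ht (hs.1.trans hst)
  obtain ⟨sPs, _, _⟩ := ind_summable hp ha hs hs.1
  obtain ⟨sQs, _, _⟩ := ind_summable hq ha hs hs.1
  obtain ⟨sPst, hPst0, hPstle⟩ := ind_summable hp hs ht hst
  obtain ⟨sQst, hQst0, hQstle⟩ := ind_summable hq hs ht hst
  set Pt := ∑' x, Set.indicator (Set.Ico a t) (rjump p) x with hPt
  set Qt := ∑' x, Set.indicator (Set.Ico a t) (rjump q) x with hQt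
  set Ps := ∑' x, Set.indicator (Set.Ico a s) (rjump p) x with hPs
  set Qs := ∑' x, Set.indicator (Set.Ico a s) (rjump q) x with hQs
  set Pst := ∑' x, Set.indicator (Set.Ico s t) (rjump p) x with hPstd
  set Qst := ∑' x, Set.indicator (Set.Ico s t) (rjump q) x with hQstd
  -- splitting
  have hsplit : ∀ (m : ℝ → ℝ), Summable (Set.indicator (Set.Ico a s) (rjump m)) →
      Summable (Set.indicator (Set.Ico s t) (rjump m)) →
      ∑' x, Set.indicator (Set.Ico a t) (rjump m) x
        = ∑' x, Set.indicator (Set.Ico a s) (rjump m) x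
          + ∑' x, Set.indicator (Set.Ico s t) (rjump m) x := by
    intro m h1 h2
    have hu : Set.Ico a t = Set.Ico a s ∪ Set.Ico s t :=
      (Set.Ico_union_Ico_eq_Ico has hst).symm
    have hd : Disjoint (Set.Ico a s) (Set.Ico s t) := Set.Ico_disjoint_Ico_same
    calc ∑' x, Set.indicator (Set.Ico a t) (rjump m) x
        = ∑' x, (Set.indicator (Set.Ico a s) (rjump m) x
            + Set.indicator (Set.Ico s t) (rjump m) x) := by
          rw [hu, Set.indicator_union_of_disjoint hd]
      _ = _ := h1.tsum_add h2
  have hsplitP : Pt = Ps + Pst := hsplit p sPs sPst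
  have hsplitQ : Qt = Qs + Qst := hsplit q sQs sQst
  -- jumpPart identities
  have hJf : ∀ t' ∈ Set.Icc a b, ∀ (P Q : ℝ),
      P = ∑' x, Set.indicator (Set.Ico a t') (rjump p) x →
      Q = ∑' x, Set.indicator (Set.Ico a t') (rjump q) x →
      Summable (Set.indicator (Set.Ico a t') (rjump p)) →
      Summable (Set.indicator (Set.Ico a t') (rjump q)) →
      jumpPart f a t' = P - Q := by
    intro t' ht' P Q hP hQ h1 h2
    have : jumpPart f a t' = ∑' x, (Set.indicator (Set.Ico a t') (rjump p) x
        - Set.indicator (Set.Ico a t') (rjump q) x) := by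
      rw [jumpPart]
      exact tsum_congr fun x => by rw [show (fun v => rjump f v) = rjump f from rfl,
        hindf t' ht']
    rw [this, h1.tsum_sub h2, hP, hQ]
  have hJg : ∀ t' ∈ Set.Icc a b, ∀ (P Q : ℝ),
      P = ∑' x, Set.indicator (Set.Ico a t') (rjump p) x →
      Q = ∑' x, Set.indicator (Set.Ico a t') (rjump q) x →
      Summable (Set.indicator (Set.Ico a t') (rjump p)) →
      Summable (Set.indicator (Set.Ico a t') (rjump q)) →
      jumpPart g a t' = (P + Q) / H := by
    intro t' ht' P Q hP hQ h1 h2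
    have e1 : jumpPart g a t' = ∑' x, ((Set.indicator (Set.Ico a t') (rjump p) x
        + Set.indicator (Set.Ico a t') (rjump q) x) / H) := by
      rw [jumpPart]
      exact tsum_congr fun x => by rw [show (fun v => rjump g v) = rjump g from rfl,
        hindg t' ht']
    rw [e1, tsum_div_const, h1.tsum_add h2, hP, hQ]
  have Ef_t : jumpPart f a t = Pt - Qt := hJf t ht Pt Qt hPt hQt sPt sQt
  have Ef_s : jumpPart f a s = Ps - Qs := hJf s hs Ps Qs hPs hQs sPs sQs
  have Eg_t : jumpPart g a t = (Pt + Qt) / H := hJg t ht Pt Qt hPt hQt sPt sQt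
  have Eg_s : jumpPart g a s = (Ps + Qs) / H := hJg s hs Ps Qs hPs hQs sPs sQs
  -- final computation
  have hfts : f t - f s = (p t - p s) - (q t - q s) := by
    simp only [hp_def, hq_def]; ring
  have hgts : H * (g t - g s) = (p t - p s) + (q t - q s) := by
    simp only [hp_def, hq_def]; ring
  set X := p t - p s - Pst with hX
  set Y := q t - q s - Qst with hY
  have hX0 : 0 ≤ X := by rw [hX]; linarith
  have hY0 : 0 ≤ Y := by rw [hY]; linarith
  have hLHS : contPart f a t - contPart f a s = X - Y := by
    simp only [contPart, Ef_t, Ef_s, hsplitP, hsplitQ, hX, hY]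
    linarith
  have hRHS : contPart g a t - contPart g a s = (X + Y) / H := by
    simp only [contPart, Eg_t, Eg_s, hsplitP, hsplitQ, hX, hY]
    field_simp
    linarith
  rw [hLHS, hRHS]
  have habs : |(X + Y) / H| = (X + Y) / H :=
    abs_of_nonneg (div_nonneg (by linarith) hH.le)
  rw [habs]
  have : H * ((X + Y) / H) = X + Y := by field_simp
  rw [this]
  exact abs_le.2 ⟨by linarith, by linarith⟩

/-- If `g : [a,b] → ℝ` is left-continuous on `(a,b)` and increasing and
`f` is `g`-Lipschitz with constant `H` (not necessarily monotone), then `f^C` is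
`g^C`-Lipschitz with constant `H`. -/
theorem contPart_gLipschitz
    (a b H : ℝ) (hab : a ≤ b) (g f : ℝ → ℝ)
    (hg : MonotoneOn g (Set.Icc a b))
    (hglc : LeftContOn g (Set.Ioo a b))
    (hf : GLipschitzOn f g H a b) :
    ∀ t ∈ Set.Icc a b, ∀ s ∈ Set.Icc a b,
      |contPart f a t - contPart f a s| ≤ H * |contPart g a t - contPart g a s| := by
  intro t ht s hs
  rcases lt_or_ge 0 H with hH | hH
  · rcases le_total s t with hst | hts
    · exact main_aux a b H g f hg hf hH hs ht hst
    · rw [abs_sub_comm (contPart f a t) _, abs_sub_comm (contPart g a t) _]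
      exact main_aux a b H g f hg hf hH ht hs hts
  · have hfc : ∀ x ∈ Set.Icc a b, ∀ y ∈ Set.Icc a b, f x = f y := by
      intro x hx y hy
      have h1 := hf x hx y hy
      have h2 : H * |g x - g y| ≤ 0 :=
        mul_nonpos_of_nonpos_of_nonneg hH (abs_nonneg _)
      have h3 : |f x - f y| = 0 := le_antisymm (by linarith) (abs_nonneg _)
      have := abs_eq_zero.1 h3
      linarith
    have hconstJump : ∀ (u : ℝ → ℝ),
        (∀ x ∈ Set.Icc a b, ∀ y ∈ Set.Icc a b, u x = u y) →
        ∀ t' ∈ Set.Icc a b, jumpPart u a t' = 0 := by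
      intro u hu t' ht'
      rw [jumpPart]
      have hz : ∀ x : ℝ, Set.indicator (Set.Ico a t') (fun v => rjump u v) x = 0 := by
        intro x
        by_cases hx : x ∈ Set.Ico a t'
        · rw [Set.indicator_of_mem hx]
          have hxab : x ∈ Set.Ico a b := ⟨hx.1, lt_of_lt_of_le hx.2 ht'.2⟩
          have hxI : x ∈ Set.Icc a b := ⟨hxab.1, hxab.2.le⟩
          have htend : Filter.Tendsto u (nhdsWithin x (Set.Ioi x)) (nhds (u x)) := by
            apply Filter.Tendsto.congr' _ tendsto_const_nhds
            filter_upwards [Ioo_mem_nhdsGT hxab.2] with y hy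
            exact hu x hxI y ⟨hxab.1.trans hy.1.le, hy.2.le⟩
          rw [rjump, rightLim_eq_of_tendsto htend,
            sub_self]
        · exact Set.indicator_of_notMem hx _
      calc ∑' x, Set.indicator (Set.Ico a t') (fun v => rjump u v) x
          = ∑' _ : ℝ, (0 : ℝ) := tsum_congr hz
        _ = 0 := tsum_zero
    have hL : contPart f a t - contPart f a s = 0 := by
      simp only [contPart, hconstJump f hfc t ht, hconstJump f hfc s hs]
      have := hfc t ht s hs
      linarith
    rw [hL, abs_zero]
    rcases eq_or_lt_of_le hH with hH0 | hHneg
    · simp [hH0]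
    · have hgc : ∀ x ∈ Set.Icc a b, ∀ y ∈ Set.Icc a b, g x = g y := by
        intro x hx y hy
        have h1 := hf x hx y hy
        by_contra hne
        have h2 : 0 < |g x - g y| := abs_pos.2 (sub_ne_zero.2 hne)
        have h3 : H * |g x - g y| < 0 := mul_neg_of_neg_of_pos hHneg h2
        have := abs_nonneg (f x - f y)
        linarith
      have hR : contPart g a t - contPart g a s = 0 := by
        simp only [contPart, hconstJump g hgc t ht, hconstJump g hgc s hs]
        have := hgc t ht s hs
        linarith
      rw [hR, abs_zero, mul_zero]
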